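/- E[ Z^{−α} ] = (c·Γ(1+α)·Γ(1−α))^{−1}. -/

import Mathlib

open MeasureTheory ProbabilityTheory Real Set

/- If Z is a positive α-stable random variable with Laplace transform
E e^{-sZ} = exp(-c Γ(1-α) s^α) for s ≥ 0, then E[Z^{-α}] = (c Γ(1+α) Γ(1-α))⁻¹. -/
theorem stable_negative_moment
    {Ω : Type*} [MeasureSpace Ω] [IsProbabilityMeasure (ℙ : Measure Ω)]
    (α c : ℝ) (hα : α ∈ Set.Ioo (0:ℝ) 1) (hc : 0 < c)
    (Z : Ω → ℝ) (hZmeas : Measurable Z) (hZpos : ∀ ω, 0 < Z ω)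
    (hZlaplace : ∀ s ≥ (0:ℝ),
      ∫ ω, Real.exp (-(s * Z ω)) = Real.exp (-(c * Real.Gamma (1 - α) * s ^ α))) :
    ∫ ω, (Z ω) ^ (-α) = (c * Real.Gamma (1 + α) * Real.Gamma (1 - α))⁻¹ := by
  obtain ⟨hα0, hα1⟩ := hα
  have hΓ1 : 0 < Real.Gamma (1 - α) := Real.Gamma_pos_of_pos (by linarith)
  have hΓα : 0 < Real.Gamma α := Real.Gamma_pos_of_pos hα0
  set K : ℝ := c * Real.Gamma (1 - α) with hK
  have hKpos : 0 < K := by positivity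
  -- measurability of the joint integrand
  have hmeasf : Measurable (fun p : Ω × ℝ =>
      (p.2 ^ (α - 1) * Real.exp (-(p.2 * Z p.1)))) :=
    (measurable_snd.pow measurable_const).mul
      ((measurable_snd.mul (hZmeas.comp measurable_fst)).neg.exp)
  -- pointwise Gamma identity : ∫ s^{α-1} e^{-sz} ds = Γ(α) z^{-α}
  have hpt : ∀ ω, ∫ s in Ioi (0:ℝ), s ^ (α - 1) * Real.exp (-(s * Z ω))
      = Real.Gamma α * (Z ω) ^ (-α) := by
    intro ω
    have h := integral_rpow_mul_exp_neg_mul_rpow (p := 1) (q := α - 1) (b := Z ω)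
      one_pos (by linarith) (hZpos ω)
    rw [show (-(α - 1 + 1) / 1) = -α by ring, show ((α - 1 + 1) / 1) = α by ring,
      one_div_one, mul_one] at h
    rw [mul_comm (Real.Gamma α) ((Z ω) ^ (-α)), ← h]
    refine setIntegral_congr_fun measurableSet_Ioi (fun x hx => ?_)
    rw [Real.rpow_one]
    ring_nf
  -- pointwise integrability in s
  have hptInt : ∀ ω, IntegrableOn
      (fun s : ℝ => s ^ (α - 1) * Real.exp (-(s * Z ω))) (Ioi 0) := by
    intro ω
    have h := integrableOn_rpow_mul_exp_neg_mul_rpow (s := α - 1) (p := 1) (b := Z ω)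
      (by linarith) one_pos (hZpos ω)
    refine h.congr_fun (fun x hx => ?_) measurableSet_Ioi
    simp only [Real.rpow_one]; ring_nf
  -- integrability of s ↦ s^{α-1} exp(-K s^α)
  have hKint : IntegrableOn (fun s : ℝ => s ^ (α - 1) * Real.exp (-(K * s ^ α))) (Ioi 0) := by
    have := (integrableOn_Ioi_comp_rpow_iff' (fun y : ℝ => Real.exp (-(K * y)))
      (p := α) hα0.ne').mpr ?_
    · refine this.congr_fun (fun x hx => ?_) measurableSet_Ioi
      simp [smul_eq_mul]
    · simpa [neg_mul] using exp_neg_integrableOn_Ioi (0:ℝ) hKpos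
  -- for s > 0, ω ↦ exp(-(s Z ω)) is integrable and its integral is exp(-K s^α)
  have hexpInt : ∀ s : ℝ, 0 ≤ s → Integrable (fun ω => Real.exp (-(s * Z ω))) ℙ := by
    intro s hs
    refine Integrable.mono' (integrable_const 1)
      ((hZmeas.const_mul s).neg.exp.aestronglyMeasurable) ?_
    filter_upwards with ω
    rw [Real.norm_eq_abs, abs_of_pos (Real.exp_pos _)]
    exact Real.exp_le_one_iff.mpr (by nlinarith [(hZpos ω).le])
  -- Tonelli
  have hswap := lintegral_lintegral_swap (μ := (ℙ : Measure Ω))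
    (ν := volume.restrict (Ioi (0:ℝ)))
    (f := fun ω s => ENNReal.ofReal (s ^ (α - 1) * Real.exp (-(s * Z ω))))
    hmeasf.ennreal_ofReal.aemeasurable
  -- left side of hswap equals Γ(α) * ∫⁻ ω, ofReal (Z ω ^ (-α))
  have hleft : (∫⁻ ω, ∫⁻ s in Ioi (0:ℝ),
        ENNReal.ofReal (s ^ (α - 1) * Real.exp (-(s * Z ω))) ∂volume ∂ℙ)
      = ENNReal.ofReal (Real.Gamma α) * ∫⁻ ω, ENNReal.ofReal ((Z ω) ^ (-α)) ∂ℙ := by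
    rw [← lintegral_const_mul _ (hZmeas.pow measurable_const).ennreal_ofReal]
    refine lintegral_congr fun ω => ?_
    rw [← ofReal_integral_eq_lintegral_ofReal (hptInt ω) ?_]
    · rw [hpt ω, ENNReal.ofReal_mul hΓα.le]
    · filter_upwards [self_mem_ae_restrict measurableSet_Ioi] with s hs
      have h : (0:ℝ) < s := hs
      positivity
  -- right side of hswap
  have hright : (∫⁻ s in Ioi (0:ℝ), ∫⁻ ω,
        ENNReal.ofReal (s ^ (α - 1) * Real.exp (-(s * Z ω))) ∂ℙ ∂volume)
      = ENNReal.ofReal (K⁻¹ * α⁻¹) := by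
    have h1 : ∀ s ∈ Ioi (0:ℝ), (∫⁻ ω,
        ENNReal.ofReal (s ^ (α - 1) * Real.exp (-(s * Z ω))) ∂ℙ)
        = ENNReal.ofReal (s ^ (α - 1) * Real.exp (-(K * s ^ α))) := by
      intro s hs
      have hs0 : (0:ℝ) < s := hs
      calc (∫⁻ ω, ENNReal.ofReal (s ^ (α - 1) * Real.exp (-(s * Z ω))) ∂ℙ)
          = ENNReal.ofReal (s ^ (α - 1)) * ∫⁻ ω, ENNReal.ofReal (Real.exp (-(s * Z ω))) ∂ℙ := by
            rw [← lintegral_const_mul _ (f := fun ω => ENNReal.ofReal (Real.exp (-(s * Z ω))))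
              ((hZmeas.const_mul s).neg.exp.ennreal_ofReal)]
            refine lintegral_congr fun ω => ?_
            rw [← ENNReal.ofReal_mul (by positivity)]
        _ = ENNReal.ofReal (s ^ (α - 1)) * ENNReal.ofReal (Real.exp (-(K * s ^ α))) := by
            rw [← ofReal_integral_eq_lintegral_ofReal (hexpInt s hs0.le)
              (Filter.Eventually.of_forall fun ω => (Real.exp_pos _).le), hZlaplace s hs0.le]
        _ = ENNReal.ofReal (s ^ (α - 1) * Real.exp (-(K * s ^ α))) := by
            rw [← ENNReal.ofReal_mul (by positivity)]
    rw [setLIntegral_congr_fun measurableSet_Ioi h1,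
      ← ofReal_integral_eq_lintegral_ofReal hKint ?_]
    · congr 1
      have h := integral_rpow_mul_exp_neg_mul_rpow (p := α) (q := α - 1) (b := K)
        hα0 (by linarith) hKpos
      rw [show (-(α - 1 + 1) / α) = -1 by field_simp; ring, show ((α - 1 + 1) / α) = 1 by field_simp; ring,
        Real.Gamma_one, mul_one, Real.rpow_neg_one, one_div] at h
      rw [← h]
      refine setIntegral_congr_fun measurableSet_Ioi (fun x hx => ?_)
      rw [neg_mul]
    · filter_upwards [self_mem_ae_restrict measurableSet_Ioi] with s hs
      have h : (0:ℝ) < s := hs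
      positivity
  -- combine
  have hA : (∫⁻ ω, ENNReal.ofReal ((Z ω) ^ (-α)) ∂ℙ)
      = ENNReal.ofReal ((Real.Gamma α)⁻¹ * (K⁻¹ * α⁻¹)) := by
    have := hswap
    rw [hleft, hright] at this
    rw [ENNReal.ofReal_mul (by positivity)]
    rw [← this, ← mul_assoc, ← ENNReal.ofReal_mul (by positivity),
      inv_mul_cancel₀ hΓα.ne', ENNReal.ofReal_one, one_mul]
  rw [integral_eq_lintegral_of_nonneg_ae
      (Filter.Eventually.of_forall fun ω => Real.rpow_nonneg (hZpos ω).le _)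
      ((hZmeas.pow measurable_const).aestronglyMeasurable), hA,
    ENNReal.toReal_ofReal (by positivity)]
  rw [show c * Real.Gamma (1 + α) * Real.Gamma (1 - α) = Real.Gamma (1 + α) * K by
      rw [hK]; ring, show (1:ℝ) + α = α + 1 by ring, Real.Gamma_add_one hα0.ne']
  rw [mul_inv, mul_inv]
  ring
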